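/- Let R be a commutative ring, d ≥ 1, and X a ℤ-indexed cochain complex of finitely generated free R-modules with differential ∂. Let α : X → X[d−1] be a morphism of complexes, let t₁, …, t_d ∈ R, and for each 1 ≤ j ≤ d let λ_j be a degree −1 graded R-linear map on X (components λ_j^i : X^i → X^{i−1}) satisfying λ_j ∘ ∂ + ∂ ∘ λ_j = t_j · id_X. Define the degree-zero operator L_α = (−1)^F ∘ α ∘ λ₁ ∘ ⋯ ∘ λ_d ∘ ∂ on X, where (−1)^F is the grading operator sending a homogeneous element x to (−1)^{|x|} x, and let L_α^i denote the induced R-linear endomorphism of X^i. Then for every i ∈ ℤ the traces satisfy tr(L_α^i) ≡ tr(L_α^0) modulo the ideal (t₁, …, t_d) of R. -/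

import Mathlib

noncomputable def gradedId {R : Type*} [CommRing R] (X : ℤ → Type*)
    [∀ i, AddCommGroup (X i)] [∀ i, Module R (X i)] :
    ∀ p q : ℤ, X p →ₗ[R] X q :=
  fun p q => if h : p = q then h ▸ (LinearMap.id : X p →ₗ[R] X p) else 0

noncomputable def gradedCompAt {R : Type*} [CommRing R] {X : ℤ → Type*}
    [∀ i, AddCommGroup (X i)] [∀ i, Module R (X i)]
    (g f : ∀ p q : ℤ, X p →ₗ[R] X q) (e : ℤ) :
    ∀ p q : ℤ, X p →ₗ[R] X q :=
  fun p q => (g (p + e) q).comp (f p (p + e))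

noncomputable def lamComp {R : Type*} [CommRing R] {X : ℤ → Type*}
    [∀ i, AddCommGroup (X i)] [∀ i, Module R (X i)]
    (lam : ℕ → ∀ p q : ℤ, X p →ₗ[R] X q) : ℕ → ∀ p q : ℤ, X p →ₗ[R] X q
  | 0 => gradedId X
  | j + 1 => gradedCompAt (lamComp lam j) (lam (j + 1)) (-1)

section Aux

variable {R : Type*} [CommRing R] {X : ℤ → Type*}
    [∀ i, AddCommGroup (X i)] [∀ i, Module R (X i)]

lemma aux_comp_left_mem (I : Ideal R) {a b c : ℤ} (g : X b →ₗ[R] X c) (f : X a →ₗ[R] X b)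
    (hf : f ∈ I • (⊤ : Submodule R (X a →ₗ[R] X b))) :
    g.comp f ∈ I • (⊤ : Submodule R (X a →ₗ[R] X c)) := by
  refine Submodule.smul_induction_on hf (fun r hr m _ => ?_) (fun x y hx hy => ?_)
  · rw [LinearMap.comp_smul]; exact Submodule.smul_mem_smul hr Submodule.mem_top
  · rw [LinearMap.comp_add]; exact add_mem hx hy

lemma aux_comp_right_mem (I : Ideal R) {a b c : ℤ} (f : X b →ₗ[R] X c) (g : X a →ₗ[R] X b)
    (hf : f ∈ I • (⊤ : Submodule R (X b →ₗ[R] X c))) :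
    f.comp g ∈ I • (⊤ : Submodule R (X a →ₗ[R] X c)) := by
  refine Submodule.smul_induction_on hf (fun r hr m _ => ?_) (fun x y hx hy => ?_)
  · rw [LinearMap.smul_comp]; exact Submodule.smul_mem_smul hr Submodule.mem_top
  · rw [LinearMap.add_comp]; exact add_mem hx hy

lemma aux_trace_mem [∀ i, Module.Free R (X i)] [∀ i, Module.Finite R (X i)]
    (I : Ideal R) {a : ℤ} (f : X a →ₗ[R] X a)
    (hf : f ∈ I • (⊤ : Submodule R (X a →ₗ[R] X a))) :
    LinearMap.trace R (X a) f ∈ I := by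
  refine Submodule.smul_induction_on hf (fun r hr m _ => ?_) (fun x y hx hy => ?_)
  · rw [map_smul]; exact Ideal.mul_mem_right _ _ hr
  · rw [map_add]; exact add_mem hx hy

lemma aux_comm {d : ℕ}
    (dX : ∀ p q : ℤ, X p →ₗ[R] X q)
    (t : ℕ → R) (lam : ℕ → ∀ p q : ℤ, X p →ₗ[R] X q)
    (hlam : ∀ j : ℕ, 1 ≤ j → j ≤ d → ∀ p : ℤ,
      (lam j (p + 1) p).comp (dX p (p + 1)) + (dX (p - 1) p).comp (lam j p (p - 1))
        = t j • (LinearMap.id : X p →ₗ[R] X p)) :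
    ∀ j : ℕ, j ≤ d → ∀ p q : ℤ, q = p - j →
      (dX q (q+1)).comp (lamComp lam j p q)
        - ((-1 : R) ^ j) • ((lamComp lam j (p+1) (q+1)).comp (dX p (p+1)))
        ∈ (Ideal.span (t '' Set.Icc 1 d)) • (⊤ : Submodule R (X p →ₗ[R] X (q+1))) := by
  set I := Ideal.span (t '' Set.Icc 1 d) with hI
  intro j
  induction j with
  | zero =>
    intro _ p q hq
    have hq' : q = p := by simpa using hq
    subst hq'
    simp [lamComp, gradedId]
  | succ j ih =>
    intro hjd p q hq
    have hj : j ≤ d := Nat.le_of_succ_le hjd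
    have hq1 : q = (p - 1) - (j : ℤ) := by push_cast at hq ⊢; omega
    have ihp := ih hj (p - 1) q hq1
    rw [sub_add_cancel] at ihp
    have h2 := aux_comp_right_mem I _ (lam (j+1) p (p-1)) ihp
    rw [LinearMap.sub_comp, LinearMap.smul_comp] at h2
    have hB : (dX (p-1) p).comp (lam (j+1) p (p-1))
        = t (j+1) • (LinearMap.id : X p →ₗ[R] X p)
          - (lam (j+1) (p+1) p).comp (dX p (p+1)) := by
      have h := hlam (j+1) (Nat.le_add_left 1 j) hjd p
      rw [add_comm] at h
      exact eq_sub_of_add_eq h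
    have htj : t (j+1) ∈ I := Ideal.subset_span ⟨j+1, ⟨Nat.le_add_left 1 j, hjd⟩, rfl⟩
    have hmem2 : ((-1:R)^j) • (t (j+1) • lamComp lam j p (q+1))
        ∈ I • (⊤ : Submodule R (X p →ₗ[R] X (q+1))) :=
      Submodule.smul_mem _ _ (Submodule.smul_mem_smul htj Submodule.mem_top)
    have hsum := add_mem h2 hmem2
    show (dX q (q+1)).comp (gradedCompAt (lamComp lam j) (lam (j+1)) (-1) p q)
        - ((-1 : R) ^ (j+1)) • ((gradedCompAt (lamComp lam j) (lam (j+1)) (-1) (p+1) (q+1)).comp (dX p (p+1)))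
        ∈ I • (⊤ : Submodule R (X p →ₗ[R] X (q+1)))
    unfold gradedCompAt
    rw [show p + -1 = p - 1 by ring, show p + 1 + -1 = p by ring]
    have key : (dX q (q+1)).comp ((lamComp lam j (p-1) q).comp (lam (j+1) p (p-1)))
        - ((-1 : R) ^ (j+1)) • ((lamComp lam j p (q+1)).comp (lam (j+1) (p+1) p)).comp (dX p (p+1))
        = ((dX q (q + 1) ∘ₗ lamComp lam j (p - 1) q) ∘ₗ lam (j + 1) p (p - 1) -
      ((-1:R) ^ j) • (lamComp lam j p (q + 1) ∘ₗ dX (p - 1) p) ∘ₗ lam (j + 1) p (p - 1))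
          + ((-1:R)^j) • (t (j+1) • lamComp lam j p (q+1)) := by
      simp only [LinearMap.comp_assoc, hB, LinearMap.comp_sub, LinearMap.comp_smul,
        LinearMap.comp_id, pow_succ]
      module
    rw [key]
    exact hsum

end Aux

theorem pretrace_independent_of_degree
    {R : Type*} [CommRing R] (X : ℤ → Type*)
    [∀ i, AddCommGroup (X i)] [∀ i, Module R (X i)]
    [∀ i, Module.Free R (X i)] [∀ i, Module.Finite R (X i)]
    {d : ℕ} (hd : 1 ≤ d)
    (dX : ∀ p q : ℤ, X p →ₗ[R] X q)
    (hdXsupp : ∀ p q : ℤ, q ≠ p + 1 → dX p q = 0)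
    (hdXsq : ∀ p : ℤ, (dX (p + 1) (p + 2)).comp (dX p (p + 1)) = 0)
    (α : ∀ p q : ℤ, X p →ₗ[R] X q)
    (hαsupp : ∀ p q : ℤ, q ≠ p + ((d : ℤ) - 1) → α p q = 0)
    (hαcomm : ∀ p : ℤ, (α (p + 1) (p + (d : ℤ))).comp (dX p (p + 1)) =
      ((-1 : R) ^ (d - 1)) •
        ((dX (p + (d : ℤ) - 1) (p + (d : ℤ))).comp (α p (p + (d : ℤ) - 1))))
    (t : ℕ → R) (lam : ℕ → ∀ p q : ℤ, X p →ₗ[R] X q)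
    (hlamsupp : ∀ (j : ℕ) (p q : ℤ), q ≠ p - 1 → lam j p q = 0)
    (hlam : ∀ j : ℕ, 1 ≤ j → j ≤ d → ∀ p : ℤ,
      (lam j (p + 1) p).comp (dX p (p + 1)) + (dX (p - 1) p).comp (lam j p (p - 1))
        = t j • (LinearMap.id : X p →ₗ[R] X p)) :
    ∀ i : ℤ,
      (LinearMap.trace R (X i))
          ((Int.negOnePow i : ℤ) •
            ((α (i + 1 - (d : ℤ)) i).comp
              ((lamComp lam d (i + 1) (i + 1 - (d : ℤ))).comp (dX i (i + 1)))))
        - (LinearMap.trace R (X 0))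
          ((Int.negOnePow 0 : ℤ) •
            ((α (0 + 1 - (d : ℤ)) 0).comp
              ((lamComp lam d (0 + 1) (0 + 1 - (d : ℤ))).comp (dX 0 (0 + 1)))))
        ∈ Ideal.span (t '' Set.Icc 1 d) := by
  intro i
  set I := Ideal.span (t '' Set.Icc 1 d) with hI
  set F : ℤ → R := fun k =>
    (LinearMap.trace R (X k))
      ((Int.negOnePow k : ℤ) •
        ((α (k + 1 - (d : ℤ)) k).comp
          ((lamComp lam d (k + 1) (k + 1 - (d : ℤ))).comp (dX k (k + 1))))) with hF
  have hsq : ((-1:R)^(d-1)) * ((-1:R)^(d-1)) = 1 := by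
    rw [← pow_add]
    exact Even.neg_one_pow ⟨d - 1, rfl⟩
  have hsign : ((-1:R)^(d-1)) * ((-1:R)^d) = -1 := by
    rw [← pow_add]
    exact Odd.neg_one_pow ⟨d - 1, by omega⟩
  have step : ∀ k : ℤ, F (k+1) - F k ∈ I := by
    intro k
    -- abbreviations
    set Tk : R := (LinearMap.trace R (X k))
      ((α (k + 1 - (d : ℤ)) k).comp
        ((lamComp lam d (k + 1) (k + 1 - (d : ℤ))).comp (dX k (k + 1)))) with hTk
    set T' : R := (LinearMap.trace R (X (k+1)))
      ((α (k + 1 + 1 - (d : ℤ)) (k+1)).comp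
        ((lamComp lam d (k + 1 + 1) (k + 1 + 1 - (d : ℤ))).comp (dX (k+1) (k + 1 + 1)))) with hT'
    -- commutation of α with the differential, at the degrees we need
    have hco : (dX k (k+1)).comp (α (k + 1 - (d : ℤ)) k)
        = ((-1:R)^(d-1)) •
          ((α (k + 1 + 1 - (d : ℤ)) (k+1)).comp (dX (k + 1 - (d : ℤ)) (k + 1 + 1 - (d : ℤ)))) := by
      have h := hαcomm (k + 1 - (d : ℤ))
      rw [show (k:ℤ) + 1 - d + d = k + 1 by ring] at h
      rw [show (k:ℤ) + 1 - d + 1 = k + 1 + 1 - d by ring] at h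
      rw [show (k:ℤ) + 1 - 1 = k by ring] at h
      rw [h, smul_smul, hsq, one_smul]
    -- the key homotopy-commutation modulo the ideal
    have hcm := aux_comm dX t lam hlam d le_rfl (k+1) (k + 1 - (d:ℤ)) (by push_cast; ring)
    rw [show (k:ℤ) + 1 - d + 1 = k + 1 + 1 - d by ring] at hcm
    have hm2 := aux_comp_left_mem I (α (k + 1 + 1 - (d : ℤ)) (k+1)) _ hcm
    rw [LinearMap.comp_sub, LinearMap.comp_smul] at hm2
    have htr := aux_trace_mem I _ hm2
    rw [map_sub, map_smul, smul_eq_mul] at htr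
    -- express Tk via the trace on X (k+1)
    have e1 : Tk = (LinearMap.trace R (X (k+1)))
        ((dX k (k+1)).comp ((α (k + 1 - (d : ℤ)) k).comp
          (lamComp lam d (k + 1) (k + 1 - (d : ℤ))))) := by
      rw [hTk, ← LinearMap.comp_assoc]
      exact LinearMap.trace_comp_comm' (dX k (k+1)) _
    have e2 : (dX k (k+1)).comp ((α (k + 1 - (d : ℤ)) k).comp
          (lamComp lam d (k + 1) (k + 1 - (d : ℤ))))
        = ((-1:R)^(d-1)) • ((α (k + 1 + 1 - (d : ℤ)) (k+1)).comp
            ((dX (k + 1 - (d : ℤ)) (k + 1 + 1 - (d : ℤ))).comp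
              (lamComp lam d (k + 1) (k + 1 - (d : ℤ))))) := by
      rw [← LinearMap.comp_assoc, hco, LinearMap.smul_comp, LinearMap.comp_assoc]
    have e3 : Tk = ((-1:R)^(d-1)) *
        (LinearMap.trace R (X (k+1)))
          ((α (k + 1 + 1 - (d : ℤ)) (k+1)).comp
            ((dX (k + 1 - (d : ℤ)) (k + 1 + 1 - (d : ℤ))).comp
              (lamComp lam d (k + 1) (k + 1 - (d : ℤ))))) := by
      rw [e1, e2, map_smul, smul_eq_mul]
    have hkey : Tk + T' ∈ I := by
      have hmul := Ideal.mul_mem_left I ((-1:R)^(d-1)) htr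
      have heq : ((-1:R)^(d-1)) *
          ((LinearMap.trace R (X (k+1)))
            ((α (k + 1 + 1 - (d : ℤ)) (k+1)).comp
              ((dX (k + 1 - (d : ℤ)) (k + 1 + 1 - (d : ℤ))).comp
                (lamComp lam d (k + 1) (k + 1 - (d : ℤ)))))
           - ((-1:R)^d) * T') = Tk + T' := by
        linear_combination -e3 - T' * hsign
      rwa [heq] at hmul
    -- final bookkeeping with signs
    set ε : R := ((Int.negOnePow k : ℤ) : R) with hε
    have hFk : F k = ε * Tk := by
      simp only [hF]
      rw [map_zsmul, zsmul_eq_mul, hε, hTk]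
    have hFk1 : F (k+1) = -ε * T' := by
      simp only [hF]
      rw [map_zsmul, zsmul_eq_mul, Int.negOnePow_succ, hε, hT']
      push_cast
      ring
    have hfin : F (k+1) - F k = (-ε) * (Tk + T') := by
      rw [hFk, hFk1]; ring
    rw [hfin]
    exact Ideal.mul_mem_left _ _ hkey
  have main : ∀ k : ℤ, F k - F 0 ∈ I := by
    intro k
    induction k using Int.induction_on with
    | zero => simp
    | succ n hn =>
      have := add_mem (step n) hn
      rwa [sub_add_sub_cancel] at this
    | pred n hn =>
      have hs := step (-n - 1)
      rw [show (-(n:ℤ) - 1 + 1) = -n by ring] at hs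
      have h2 : F (-(n:ℤ) - 1) - F 0 = (F (-(n:ℤ)) - F 0) - (F (-(n:ℤ)) - F (-(n:ℤ) - 1)) := by
        ring
      rw [h2]
      exact sub_mem hn hs
  exact main i
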